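/- arXiv:1703.08315 — 3 statements merged into one kernel-verified Lean document; each statement's English description precedes it below -/
import Mathlib

section
/- With q_p = 1 − p/X for primes p ≤ X, the quantity −log(∏_{p ≤ X} (p−1)/(p − q_p)) = −∑_{p ≤ X} log(1 − p/(p + (p−1)X)) is O(1/log X) as X → ∞; in particular ∏_{p ≤ X} (p−1)/(p − q_p) = 1 + O(1/log X). -/
open Finset Filter Asymptotics

/-- The finset of primes `≤ X`. -/
noncomputable def primesUpTo (X : ℝ) : Finset ℕ :=
  (Finset.range (⌊X⌋₊ + 1)).filter Nat.Prime

lemma mem_primesUpTo {X : ℝ} (hX : 0 ≤ X) {p : ℕ} (hp : p ∈ primesUpTo X) :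
    p.Prime ∧ (p : ℝ) ≤ X := by
  simp only [primesUpTo, Finset.mem_filter, Finset.mem_range, Nat.lt_succ_iff] at hp
  exact ⟨hp.2, (Nat.le_floor_iff hX).mp hp.1⟩

lemma two_le_p {X : ℝ} (hX : 0 ≤ X) {p : ℕ} (hp : p ∈ primesUpTo X) : (2:ℝ) ≤ (p:ℝ) := by
  exact_mod_cast (mem_primesUpTo hX hp).1.two_le

/-- Chebyshev-type bound from the primorial bound. -/
lemma theta_le {X : ℝ} (hX : 0 ≤ X) :
    ∑ p ∈ primesUpTo X, Real.log p ≤ X * Real.log 4 := by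
  have h1 : ∑ p ∈ primesUpTo X, Real.log p
      = Real.log ((primorial ⌊X⌋₊ : ℕ) : ℝ) := by
    rw [primorial, Nat.cast_prod, Real.log_prod]
    · rfl
    · intro p hp
      have := (mem_primesUpTo hX hp).1.two_le
      positivity
  rw [h1]
  have h2 : ((primorial ⌊X⌋₊ : ℕ) : ℝ) ≤ (4:ℝ) ^ ⌊X⌋₊ := by
    exact_mod_cast primorial_le_4_pow ⌊X⌋₊
  calc Real.log ((primorial ⌊X⌋₊ : ℕ) : ℝ) ≤ Real.log ((4:ℝ) ^ ⌊X⌋₊) := by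
        apply Real.log_le_log (by exact_mod_cast primorial_pos ⌊X⌋₊) h2
    _ = (⌊X⌋₊ : ℝ) * Real.log 4 := by rw [Real.log_pow]
    _ ≤ X * Real.log 4 := by
        apply mul_le_mul_of_nonneg_right (Nat.floor_le hX)
        positivity

lemma term_pos {p : ℕ} (hp : (2:ℝ) ≤ (p:ℝ)) {X : ℝ} (hX : 2 ≤ X) :
    0 < 1 - (p : ℝ) / ((p : ℝ) + ((p : ℝ) - 1) * X) := by
  have hD : 0 < (p : ℝ) + ((p : ℝ) - 1) * X := by nlinarith
  rw [sub_pos, div_lt_one hD]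
  nlinarith

lemma term_eq {p : ℕ} (hp : (2:ℝ) ≤ (p:ℝ)) {X : ℝ} (hX : 2 ≤ X) :
    ((p : ℝ) - 1) / ((p : ℝ) - (1 - (p : ℝ)/X))
      = 1 - (p : ℝ) / ((p : ℝ) + ((p : ℝ) - 1) * X) := by
  have hX0 : (0:ℝ) < X := by linarith
  have h2 : ((p : ℝ) + ((p : ℝ) - 1) * X) ≠ 0 := by nlinarith
  have e1 : (p : ℝ) - (1 - (p : ℝ)/X) = ((p : ℝ) + ((p : ℝ) - 1) * X)/X := by
    field_simp
    ring
  have e2 : 1 - (p : ℝ) / ((p : ℝ) + ((p : ℝ) - 1) * X)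
      = ((p : ℝ) - 1) * X / ((p : ℝ) + ((p : ℝ) - 1) * X) := by
    field_simp
    ring
  rw [e1, e2, div_div_eq_mul_div]

lemma neg_log_nonneg {p : ℕ} (hp : (2:ℝ) ≤ (p:ℝ)) {X : ℝ} (hX : 2 ≤ X) :
    0 ≤ -Real.log (1 - (p : ℝ) / ((p : ℝ) + ((p : ℝ) - 1) * X)) := by
  have hD : 0 < (p : ℝ) + ((p : ℝ) - 1) * X := by nlinarith
  have h : (p : ℝ) / ((p : ℝ) + ((p : ℝ) - 1) * X) ≥ 0 := by positivity
  have h1 : 1 - (p : ℝ) / ((p : ℝ) + ((p : ℝ) - 1) * X) ≤ 1 := by linarith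
  have h0 := term_pos hp hX
  simpa using Real.log_nonpos (by linarith) h1

lemma neg_log_le {p : ℕ} (hp : (2:ℝ) ≤ (p:ℝ)) {X : ℝ} (hX : 2 ≤ X) :
    -Real.log (1 - (p : ℝ) / ((p : ℝ) + ((p : ℝ) - 1) * X)) ≤ 2 / X := by
  have hX0 : (0:ℝ) < X := by linarith
  have hD : 0 < (p : ℝ) + ((p : ℝ) - 1) * X := by nlinarith
  have hB : 0 < ((p : ℝ) - 1) * X := by nlinarith
  have h0 := term_pos hp hX
  have key : 1 - (p : ℝ) / ((p : ℝ) + ((p : ℝ) - 1) * X)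
      = (((p : ℝ) - 1) * X) / ((p : ℝ) + ((p : ℝ) - 1) * X) := by
    field_simp
    ring
  rw [key, ← Real.log_inv]
  have hinv : ((((p : ℝ) - 1) * X) / ((p : ℝ) + ((p : ℝ) - 1) * X))⁻¹
      = 1 + (p : ℝ) / (((p : ℝ) - 1) * X) := by
    have hp1 : (p : ℝ) - 1 ≠ 0 := (by linarith : (0:ℝ) < (p : ℝ) - 1).ne'
    rw [inv_div]; field_simp; ring
  rw [hinv]
  calc Real.log (1 + (p : ℝ) / (((p : ℝ) - 1) * X))
      ≤ (1 + (p : ℝ) / (((p : ℝ) - 1) * X)) - 1 :=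
        Real.log_le_sub_one_of_pos (by positivity)
    _ = (p : ℝ) / (((p : ℝ) - 1) * X) := by ring
    _ ≤ 2 / X := by
        rw [div_le_div_iff₀ hB hX0]
        nlinarith

/-- With `q_p = 1 − p/X`, the quantity
`−log ∏_{p ≤ X} (p−1)/(p − q_p) = −∑_{p ≤ X} log(1 − p/(p + (p−1)X))`
is `O(1/log X)` as `X → ∞`; in particular
`∏_{p ≤ X} (p−1)/(p − q_p) = 1 + O(1/log X)`. -/
theorem second_prod_close_to_one :
    (∀ X : ℝ, 2 ≤ X →
      -Real.log (∏ p ∈ primesUpTo X, (((p : ℝ) - 1) / ((p : ℝ) - (1 - (p : ℝ)/X))))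
        = -∑ p ∈ primesUpTo X, Real.log (1 - (p : ℝ) / ((p : ℝ) + ((p : ℝ) - 1) * X))) ∧
    (fun X : ℝ =>
        -Real.log (∏ p ∈ primesUpTo X, (((p : ℝ) - 1) / ((p : ℝ) - (1 - (p : ℝ)/X)))))
      =O[atTop] (fun X : ℝ => 1 / Real.log X) ∧
    (fun X : ℝ =>
        (∏ p ∈ primesUpTo X, (((p : ℝ) - 1) / ((p : ℝ) - (1 - (p : ℝ)/X)))) - 1)
      =O[atTop] (fun X : ℝ => 1 / Real.log X) := by
  classical
  -- the product rewritten termwise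
  have hprod : ∀ X : ℝ, 2 ≤ X →
      (∏ p ∈ primesUpTo X, (((p : ℝ) - 1) / ((p : ℝ) - (1 - (p : ℝ)/X))))
        = ∏ p ∈ primesUpTo X, (1 - (p : ℝ) / ((p : ℝ) + ((p : ℝ) - 1) * X)) := by
    intro X hX
    exact Finset.prod_congr rfl fun p hp => term_eq (two_le_p (by linarith) hp) hX
  have heq : ∀ X : ℝ, 2 ≤ X →
      -Real.log (∏ p ∈ primesUpTo X, (((p : ℝ) - 1) / ((p : ℝ) - (1 - (p : ℝ)/X))))
        = -∑ p ∈ primesUpTo X, Real.log (1 - (p : ℝ) / ((p : ℝ) + ((p : ℝ) - 1) * X)) := by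
    intro X hX
    rw [hprod X hX, Real.log_prod]
    intro p hp
    exact ne_of_gt (term_pos (two_le_p (by linarith) hp) hX)
  -- nonnegativity of the sum of -log terms
  have hF_nonneg : ∀ X : ℝ, 2 ≤ X →
      0 ≤ -∑ p ∈ primesUpTo X, Real.log (1 - (p : ℝ) / ((p : ℝ) + ((p : ℝ) - 1) * X)) := by
    intro X hX
    rw [← Finset.sum_neg_distrib]
    exact Finset.sum_nonneg fun p hp => neg_log_nonneg (two_le_p (by linarith) hp) hX
  -- main bound
  have hmain : ∀ X : ℝ, 4 ≤ X →
      -∑ p ∈ primesUpTo X, Real.log (1 - (p : ℝ) / ((p : ℝ) + ((p : ℝ) - 1) * X))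
        ≤ 20 / Real.log X := by
    intro X hX
    have hX2 : (2:ℝ) ≤ X := by linarith
    have hX0 : (0:ℝ) < X := by linarith
    have hlog : 0 < Real.log X := Real.log_pos (by linarith)
    have hsqrt : (2:ℝ) ≤ Real.sqrt X := by
      rw [show (2:ℝ) = Real.sqrt 4 by
        rw [show (4:ℝ) = 2^2 by norm_num, Real.sqrt_sq (by norm_num)]]
      exact Real.sqrt_le_sqrt hX
    have hsqrt0 : 0 < Real.sqrt X := by linarith
    -- log X ≤ 2 √X
    have hlogsqrt : Real.log X ≤ 2 * Real.sqrt X := by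
      have h1 : Real.log (Real.sqrt X) = Real.log X / 2 := Real.log_sqrt (le_of_lt hX0)
      have h2 := Real.log_le_sub_one_of_pos hsqrt0
      rw [h1] at h2
      linarith
    rw [← Finset.sum_neg_distrib]
    set S := primesUpTo X with hS
    have step1 : ∑ p ∈ S, -Real.log (1 - (p : ℝ) / ((p : ℝ) + ((p : ℝ) - 1) * X))
        ≤ ∑ p ∈ S, (if (p:ℝ) ≤ Real.sqrt X then 2 / X
            else 4 * Real.log p / (X * Real.log X)) := by
      apply Finset.sum_le_sum
      intro p hp
      have hp2 : (2:ℝ) ≤ (p:ℝ) := two_le_p (by linarith) hp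
      by_cases h : (p:ℝ) ≤ Real.sqrt X
      · rw [if_pos h]; exact neg_log_le hp2 hX2
      · rw [if_neg h]
        push_neg at h
        have hlogp : Real.log X / 2 ≤ Real.log p := by
          have h2 : Real.log (Real.sqrt X) ≤ Real.log p :=
            Real.log_le_log hsqrt0 (le_of_lt h)
          rw [Real.log_sqrt (le_of_lt hX0)] at h2
          exact h2
        calc -Real.log (1 - (p : ℝ) / ((p : ℝ) + ((p : ℝ) - 1) * X)) ≤ 2 / X :=
              neg_log_le hp2 hX2
          _ ≤ 4 * Real.log p / (X * Real.log X) := by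
              rw [div_le_div_iff₀ hX0 (by positivity)]
              nlinarith
    have step2 : ∑ p ∈ S, (if (p:ℝ) ≤ Real.sqrt X then 2 / X
            else 4 * Real.log p / (X * Real.log X))
        ≤ 8 / Real.log X + 12 / Real.log X := by
      rw [Finset.sum_ite]
      apply add_le_add
      · -- small primes
        have hcard : ((S.filter (fun p : ℕ => (p:ℝ) ≤ Real.sqrt X)).card : ℝ)
            ≤ 2 * Real.sqrt X := by
          have hsub : S.filter (fun p : ℕ => (p:ℝ) ≤ Real.sqrt X)
              ⊆ Finset.range (⌊Real.sqrt X⌋₊ + 1) := by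
            intro p hp
            rw [Finset.mem_filter] at hp
            rw [Finset.mem_range, Nat.lt_succ_iff]
            exact Nat.le_floor hp.2
          calc ((S.filter (fun p : ℕ => (p:ℝ) ≤ Real.sqrt X)).card : ℝ)
              ≤ ((Finset.range (⌊Real.sqrt X⌋₊ + 1)).card : ℝ) := by
                exact_mod_cast Finset.card_le_card hsub
            _ = (⌊Real.sqrt X⌋₊ : ℝ) + 1 := by simp
            _ ≤ Real.sqrt X + 1 := by
                have := Nat.floor_le (le_of_lt hsqrt0); linarith
            _ ≤ 2 * Real.sqrt X := by linarith
        rw [Finset.sum_const, nsmul_eq_mul]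
        calc ((S.filter (fun p : ℕ => (p:ℝ) ≤ Real.sqrt X)).card : ℝ) * (2 / X)
            ≤ 2 * Real.sqrt X * (2 / X) := by
              apply mul_le_mul_of_nonneg_right hcard (by positivity)
          _ = 4 * Real.sqrt X / X := by ring
          _ ≤ 8 / Real.log X := by
              rw [div_le_div_iff₀ hX0 hlog]
              have hss : Real.sqrt X * Real.sqrt X = X := Real.mul_self_sqrt (le_of_lt hX0)
              nlinarith
      · -- large primes
        have hlogp_nonneg : ∀ p ∈ S, 0 ≤ Real.log p := by
          intro p hp
          have hp2 : (2:ℝ) ≤ (p:ℝ) := two_le_p (by linarith) hp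
          exact Real.log_nonneg (by linarith)
        have hlog4 : Real.log 4 ≤ 3 := by
          have := Real.log_le_sub_one_of_pos (show (0:ℝ) < 4 by norm_num)
          linarith
        calc ∑ p ∈ S.filter (fun p : ℕ => ¬(p:ℝ) ≤ Real.sqrt X),
              4 * Real.log p / (X * Real.log X)
            ≤ ∑ p ∈ S, 4 * Real.log p / (X * Real.log X) := by
              apply Finset.sum_le_sum_of_subset_of_nonneg (Finset.filter_subset _ _)
              intro p hp _
              have := hlogp_nonneg p hp
              positivity
          _ = (4 / (X * Real.log X)) * ∑ p ∈ S, Real.log p := by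
              rw [Finset.mul_sum]
              exact Finset.sum_congr rfl fun p _ => by ring
          _ ≤ (4 / (X * Real.log X)) * (X * Real.log 4) := by
              apply mul_le_mul_of_nonneg_left (theta_le (by linarith)) (by positivity)
          _ = 4 * Real.log 4 / Real.log X := by
              field_simp
          _ ≤ 12 / Real.log X := by
              rw [div_le_div_iff₀ hlog hlog]
              nlinarith
    have : (8:ℝ) / Real.log X + 12 / Real.log X = 20 / Real.log X := by ring
    linarith
  -- assemble
  refine ⟨heq, ?_, ?_⟩
  · rw [isBigO_iff]
    refine ⟨20, ?_⟩
    filter_upwards [eventually_ge_atTop (4:ℝ)] with X hX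
    have hX2 : (2:ℝ) ≤ X := by linarith
    have hlog : 0 < Real.log X := Real.log_pos (by linarith)
    rw [heq X hX2]
    rw [Real.norm_eq_abs, Real.norm_eq_abs, abs_of_nonneg (hF_nonneg X hX2),
      abs_of_nonneg (by positivity : (0:ℝ) ≤ 1 / Real.log X)]
    calc -∑ p ∈ primesUpTo X, Real.log (1 - (p : ℝ) / ((p : ℝ) + ((p : ℝ) - 1) * X))
        ≤ 20 / Real.log X := hmain X hX
      _ = 20 * (1 / Real.log X) := by ring
  · rw [isBigO_iff]
    refine ⟨20, ?_⟩
    filter_upwards [eventually_ge_atTop (4:ℝ)] with X hX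
    have hX2 : (2:ℝ) ≤ X := by linarith
    have hlog : 0 < Real.log X := Real.log_pos (by linarith)
    set P := ∏ p ∈ primesUpTo X, (((p : ℝ) - 1) / ((p : ℝ) - (1 - (p : ℝ)/X))) with hP
    set F := -∑ p ∈ primesUpTo X, Real.log (1 - (p : ℝ) / ((p : ℝ) + ((p : ℝ) - 1) * X))
      with hF
    have hPpos : 0 < P := by
      rw [hP, hprod X hX2]
      exact Finset.prod_pos fun p hp => term_pos (two_le_p (by linarith) hp) hX2
    have hlogP : Real.log P = -F := by
      have := heq X hX2
      rw [← hP, ← hF] at this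
      linarith
    have hFnn : 0 ≤ F := hF_nonneg X hX2
    have hexp : P = Real.exp (-F) := by rw [← hlogP, Real.exp_log hPpos]
    have hPle : P ≤ 1 := by
      rw [hexp]
      calc Real.exp (-F) ≤ Real.exp 0 := Real.exp_le_exp.mpr (by linarith)
        _ = 1 := Real.exp_zero
    have hPge : 1 - F ≤ P := by
      rw [hexp]
      have := Real.add_one_le_exp (-F)
      linarith
    rw [Real.norm_eq_abs, Real.norm_eq_abs, abs_of_nonpos (by linarith : P - 1 ≤ 0),
      abs_of_nonneg (by positivity : (0:ℝ) ≤ 1 / Real.log X)]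
    calc -(P - 1) = 1 - P := by ring
      _ ≤ F := by linarith
      _ ≤ 20 / Real.log X := hmain X hX
      _ = 20 * (1 / Real.log X) := by ring
end

section
/- Self-similarity step: let (q_n) be nonnegative, completely multiplicative, with ∑ q_n < ∞, and let Φ(t) = e^{−t²}, c > 0, and k ≥ 1 an integer. Then ∑_{m,n ≥ 1} ∫_{−∞}^{∞} k^{−it} q_m q_n (m/n)^{it} Φ(ct) dt ≥ q_k · ∑_{r,n ≥ 1} ∫_{−∞}^{∞} q_r q_n (r/n)^{it} Φ(ct) dt. -/
open MeasureTheory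

noncomputable def Gc (c a : ℝ) : ℝ :=
  Real.sqrt (Real.pi / c ^ 2) * Real.exp (-a ^ 2 / (4 * c ^ 2))

lemma Gc_nonneg (c a : ℝ) : 0 ≤ Gc c a := by
  unfold Gc; positivity

lemma Gc_le (c a : ℝ) : Gc c a ≤ Real.sqrt (Real.pi / c ^ 2) := by
  unfold Gc
  have h1 : Real.exp (-a ^ 2 / (4 * c ^ 2)) ≤ 1 := by
    rw [Real.exp_le_one_iff]
    apply div_nonpos_of_nonpos_of_nonneg
    · simp [sq_nonneg a]
    · positivity
  calc Real.sqrt (Real.pi / c ^ 2) * Real.exp (-a ^ 2 / (4 * c ^ 2))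
      ≤ Real.sqrt (Real.pi / c ^ 2) * 1 :=
        mul_le_mul_of_nonneg_left h1 (Real.sqrt_nonneg _)
    _ = Real.sqrt (Real.pi / c ^ 2) := mul_one _

lemma aux_int (c : ℝ) (hc : 0 < c) (a : ℝ) :
    (∫ t : ℝ, Complex.exp (Complex.I * t * a) * Real.exp (-(c * t) ^ 2))
      = ((Gc c a : ℝ) : ℂ) := by
  have hb : 0 < ((c : ℂ) ^ 2).re := by
    rw [← Complex.ofReal_pow, Complex.ofReal_re]; positivity
  have h := fourierIntegral_gaussian hb (a : ℂ)
  have h1 : ∀ t : ℝ, Complex.exp (Complex.I * t * a) * (Real.exp (-(c * t) ^ 2) : ℂ)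
      = Complex.exp (Complex.I * a * t) * Complex.exp (-(c : ℂ) ^ 2 * t ^ 2) := by
    intro t
    rw [Complex.ofReal_exp, ← Complex.exp_add, ← Complex.exp_add]
    congr 1
    push_cast
    ring
  simp_rw [h1]
  rw [h]
  have hval : ((Real.pi : ℂ) / (c : ℂ) ^ 2) ^ (1 / 2 : ℂ)
      = ((Real.sqrt (Real.pi / c ^ 2) : ℝ) : ℂ) := by
    rw [Real.sqrt_eq_rpow]
    rw [Complex.ofReal_cpow (by positivity)]
    push_cast
    norm_num
  rw [hval]
  unfold Gc
  rw [Complex.ofReal_mul, Complex.ofReal_exp]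
  congr 1
  push_cast
  ring

/-- Self-similarity step: for nonnegative, completely multiplicative, summable weights `q`,
`Φ(t) = e^{−t²}`, `c > 0` and an integer `k ≥ 1`,
`∑_{m,n ≥ 1} ∫ k^{−it} q_m q_n (m/n)^{it} Φ(ct) dt
  ≥ q_k · ∑_{r,n ≥ 1} ∫ q_r q_n (r/n)^{it} Φ(ct) dt`. -/
theorem self_similarity_step (q : ℕ → ℝ)
    (hq : ∀ n, 0 ≤ q n) (hq0 : q 0 = 0) (hq1 : q 1 = 1)
    (hmul : ∀ m n : ℕ, q (m * n) = q m * q n) (hsum : Summable q)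
    (c : ℝ) (hc : 0 < c) (k : ℕ) (hk : 1 ≤ k) :
    q k * (∑' m : ℕ, ∑' n : ℕ, ∫ t : ℝ,
        (q m * q n : ℝ) * Complex.exp (Complex.I * t * (Real.log m - Real.log n))
          * Real.exp (-(c * t)^2)).re
      ≤ (∑' m : ℕ, ∑' n : ℕ, ∫ t : ℝ,
        Complex.exp (-(Complex.I * t) * Real.log k)
          * (q m * q n : ℝ) * Complex.exp (Complex.I * t * (Real.log m - Real.log n))
          * Real.exp (-(c * t)^2)).re := by
  -- Evaluate the left integrals
  have hL : ∀ m n : ℕ, (∫ t : ℝ,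
      (q m * q n : ℝ) * Complex.exp (Complex.I * t * (Real.log m - Real.log n))
        * Real.exp (-(c * t)^2))
      = ((q m * q n * Gc c (Real.log m - Real.log n) : ℝ) : ℂ) := by
    intro m n
    have h1 : ∀ t : ℝ, ((q m * q n : ℝ) : ℂ)
        * Complex.exp (Complex.I * t * ((Real.log m : ℂ) - Real.log n))
        * (Real.exp (-(c * t)^2) : ℂ)
        = ((q m * q n : ℝ) : ℂ)
          * (Complex.exp (Complex.I * t * ((Real.log m - Real.log n : ℝ) : ℂ))
            * (Real.exp (-(c * t)^2) : ℂ)) := by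
      intro t
      push_cast
      ring
    simp_rw [h1, integral_const_mul, aux_int c hc]
    push_cast
    ring
  -- Evaluate the right integrals
  have hR : ∀ m n : ℕ, (∫ t : ℝ,
      Complex.exp (-(Complex.I * t) * Real.log k)
        * (q m * q n : ℝ) * Complex.exp (Complex.I * t * (Real.log m - Real.log n))
        * Real.exp (-(c * t)^2))
      = ((q m * q n * Gc c (Real.log m - Real.log n - Real.log k) : ℝ) : ℂ) := by
    intro m n
    have h1 : ∀ t : ℝ, Complex.exp (-(Complex.I * t) * (Real.log k : ℂ))
        * ((q m * q n : ℝ) : ℂ)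
        * Complex.exp (Complex.I * t * ((Real.log m : ℂ) - Real.log n))
        * (Real.exp (-(c * t)^2) : ℂ)
        = ((q m * q n : ℝ) : ℂ)
          * (Complex.exp (Complex.I * t * ((Real.log m - Real.log n - Real.log k : ℝ) : ℂ))
            * (Real.exp (-(c * t)^2) : ℂ)) := by
      intro t
      have hcomb : Complex.exp (-(Complex.I * t) * (Real.log k : ℂ))
          * Complex.exp (Complex.I * t * ((Real.log m : ℂ) - Real.log n))
          = Complex.exp (Complex.I * t * ((Real.log m - Real.log n - Real.log k : ℝ) : ℂ)) := by
        rw [← Complex.exp_add]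
        congr 1
        push_cast
        ring
      rw [← hcomb]
      ring
    simp_rw [h1, integral_const_mul, aux_int c hc]
    push_cast
    ring
  simp_rw [hL, hR, ← Complex.ofReal_tsum]
  rw [Complex.ofReal_re, Complex.ofReal_re]
  set F : ℕ → ℕ → ℝ := fun m n => q m * q n * Gc c (Real.log m - Real.log n) with hF
  set FR : ℕ → ℕ → ℝ := fun m n => q m * q n * Gc c (Real.log m - Real.log n - Real.log k)
    with hFR
  have hC : ∀ a : ℝ, 0 ≤ Gc c a := Gc_nonneg c
  set C : ℝ := Real.sqrt (Real.pi / c ^ 2) with hCdef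
  have hCpos : 0 ≤ C := Real.sqrt_nonneg _
  -- key identity: q k * F r n = FR (k*r) n
  have hkey : ∀ r n : ℕ, q k * F r n = FR (k * r) n := by
    intro r n
    rcases Nat.eq_zero_or_pos r with rfl | hr
    · simp [hF, hFR, hq0]
    · have hk0 : (k : ℝ) ≠ 0 := by positivity
      have hr0 : (r : ℝ) ≠ 0 := by positivity
      have hlog : Real.log ((k * r : ℕ) : ℝ) = Real.log k + Real.log r := by
        push_cast
        rw [Real.log_mul hk0 hr0]
      simp only [hF, hFR, hmul k r, hlog]
      ring_nf
  -- summability of FR rows and columns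
  have hFRrow : ∀ m : ℕ, Summable (fun n => FR m n) := by
    intro m
    apply Summable.of_nonneg_of_le (fun n => by
      have := hq m; have := hq n; have := hC (Real.log m - Real.log n - Real.log k)
      positivity)
      (fun n => ?_) (hsum.mul_left (q m * C))
    simp only [hFR]
    calc q m * q n * Gc c (Real.log m - Real.log n - Real.log k)
        ≤ q m * q n * C := by
          have := hq m; have := hq n
          gcongr
          exact Gc_le c _
      _ = q m * C * q n := by ring
  have hFRcol : Summable (fun m => ∑' n, FR m n) := by
    apply Summable.of_nonneg_of_le (fun m => tsum_nonneg (fun n => by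
      have := hq m; have := hq n; have := hC (Real.log m - Real.log n - Real.log k)
      positivity)) (fun m => ?_) (hsum.mul_left (C * ∑' n, q n))
    calc (∑' n, FR m n) ≤ ∑' n, (q m * C * q n) := by
          apply Summable.tsum_le_tsum _ (hFRrow m) (hsum.mul_left _)
          intro n
          simp only [hFR]
          calc q m * q n * Gc c (Real.log m - Real.log n - Real.log k)
              ≤ q m * q n * C := by
                have := hq m; have := hq n
                gcongr
                exact Gc_le c _
            _ = q m * C * q n := by ring
      _ = q m * C * ∑' n, q n := tsum_mul_left
      _ = C * (∑' n, q n) * q m := by ring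
  -- reduce to a sum over multiples of k
  rw [← tsum_mul_left]
  have hinj : Function.Injective (fun r : ℕ => k * r) := fun a b h => by
    have hk' : k ≠ 0 := by omega
    exact Nat.eq_of_mul_eq_mul_left (by omega) h
  have hterm : ∀ r : ℕ, q k * ∑' n, F r n = ∑' n, FR (k * r) n := by
    intro r
    rw [← tsum_mul_left]
    exact tsum_congr (fun n => hkey r n)
  calc (∑' r, q k * ∑' n, F r n) = ∑' r, ∑' n, FR (k * r) n := tsum_congr hterm
    _ ≤ ∑' m, ∑' n, FR m n := by
        apply Summable.tsum_le_tsum_of_inj (fun r : ℕ => k * r) hinj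
        · intro m _
          exact tsum_nonneg (fun n => by
            have := hq m; have := hq n
            have := hC (Real.log m - Real.log n - Real.log k)
            positivity)
        · intro r; exact le_rfl
        · exact hFRcol.comp_injective hinj
        · exact hFRcol
end

section
/- Let (q_n) be nonnegative completely multiplicative summable weights and (a_k) nonnegative coefficients with ∑ a_k q_k < ∞, Φ(t) = e^{−t²}, c > 0. Define I₁ = ∑_k a_k ∑_{m,n} ∫ k^{−it} q_m q_n (m/n)^{it} Φ(ct) dt and I₂ = ∑_{m,n} ∫ q_m q_n (m/n)^{it} Φ(ct) dt. Then I₁/I₂ ≥ ∑_{k=1}^∞ a_k q_k (with I₂ > 0). -/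
open MeasureTheory Real

noncomputable def Gg (c x : ℝ) : ℝ := Real.sqrt (π / c^2) * Real.exp (-(x^2 / (4 * c^2)))

lemma Gg_pos (c x : ℝ) (hc : 0 < c) : 0 < Gg c x := by
  unfold Gg
  have h1 : 0 < π / c^2 := by positivity
  positivity

lemma Gg_nonneg (c x : ℝ) : 0 ≤ Gg c x := by unfold Gg; positivity

lemma Gg_le (c x : ℝ) : Gg c x ≤ Real.sqrt (π / c^2) := by
  unfold Gg
  nth_rewrite 2 [← mul_one (Real.sqrt (π / c^2))]
  apply mul_le_mul_of_nonneg_left _ (Real.sqrt_nonneg _)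
  rw [Real.exp_le_one_iff]
  have h : 0 ≤ x^2 / (4*c^2) := by positivity
  linarith

lemma gauss_int (c x : ℝ) (hc : 0 < c) :
    ∫ t : ℝ, Complex.exp (Complex.I * t * x) * (Real.exp (-(c*t)^2) : ℂ)
      = ((Gg c x : ℝ) : ℂ) := by
  have h1 : ∀ t : ℝ, (Real.exp (-(c*t)^2) : ℂ) = Complex.exp (-(c^2 : ℂ) * (t:ℂ)^2) := by
    intro t
    rw [show (-(c^2 : ℂ) * (t:ℂ)^2) = ((-(c*t)^2 : ℝ) : ℂ) by push_cast; ring,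
      ← Complex.ofReal_exp]
  have hb : (0:ℝ) < ((c^2 : ℂ)).re := by
    rw [show ((c:ℂ)^2) = ((c^2 : ℝ):ℂ) by push_cast; ring, Complex.ofReal_re]
    positivity
  calc ∫ t : ℝ, Complex.exp (Complex.I * t * x) * (Real.exp (-(c*t)^2) : ℂ)
      = ∫ t : ℝ, Complex.exp (Complex.I * (x:ℂ) * t) * Complex.exp (-(c^2:ℂ) * (t:ℂ)^2) := by
        congr 1; ext t; rw [h1]; ring_nf
    _ = (π / (c^2:ℂ)) ^ (1/2 : ℂ) * Complex.exp (-(x:ℂ)^2 / (4 * (c^2:ℂ))) :=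
        fourierIntegral_gaussian hb (x:ℂ)
    _ = _ := by
        rw [show ((π : ℝ) / (c^2:ℂ)) = ((π / c^2 : ℝ) : ℂ) by push_cast; ring]
        rw [show (1/2 : ℂ) = ((1/2 : ℝ) : ℂ) by norm_num]
        rw [← Complex.ofReal_cpow (by positivity) (1/2 : ℝ)]
        rw [show (-(x:ℂ)^2 / (4 * (c^2:ℂ))) = ((-(x^2/(4*c^2)) : ℝ) : ℂ) by push_cast; ring,
          ← Complex.ofReal_exp, ← Complex.ofReal_mul]
        unfold Gg
        norm_num [Real.rpow_natCast, Real.sqrt_eq_rpow]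

lemma int2 (c x r : ℝ) (hc : 0 < c) :
    (∫ t : ℝ, (r : ℂ) * Complex.exp (Complex.I * t * x) * (Real.exp (-(c*t)^2) : ℂ))
      = ((r * Gg c x : ℝ) : ℂ) := by
  have h : ∀ t : ℝ, (r : ℂ) * Complex.exp (Complex.I * t * x) * (Real.exp (-(c*t)^2) : ℂ)
      = (r : ℂ) * (Complex.exp (Complex.I * t * x) * (Real.exp (-(c*t)^2) : ℂ)) := fun t => by
    ring
  rw [integral_congr_ae (Filter.Eventually.of_forall h), MeasureTheory.integral_const_mul,
    gauss_int c x hc, ← Complex.ofReal_mul]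

lemma int1 (c x L r : ℝ) (hc : 0 < c) :
    (∫ t : ℝ, Complex.exp (-(Complex.I * t) * L) * (r : ℂ)
        * Complex.exp (Complex.I * t * x) * (Real.exp (-(c*t)^2) : ℂ))
      = ((r * Gg c (x - L) : ℝ) : ℂ) := by
  have h : ∀ t : ℝ, Complex.exp (-(Complex.I * t) * L) * (r : ℂ)
        * Complex.exp (Complex.I * t * x) * (Real.exp (-(c*t)^2) : ℂ)
      = (r : ℂ) * Complex.exp (Complex.I * t * ((x - L : ℝ) : ℂ)) * (Real.exp (-(c*t)^2) : ℂ) := by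
    intro t
    rw [show Complex.I * t * ((x - L : ℝ) : ℂ) = -(Complex.I * t) * L + Complex.I * t * x by
      push_cast; ring, Complex.exp_add]
    ring
  rw [integral_congr_ae (Filter.Eventually.of_forall h), int2 c (x - L) r hc]

set_option maxHeartbeats 1000000 in
/-- Let `q` be nonnegative completely multiplicative summable weights (with `q 1 = 1`)
and `a` nonnegative coefficients with `∑ a_k q_k < ∞`, `Φ(t) = e^{−t²}`, `c > 0`. With
`I₁ = ∑_k a_k ∑_{m,n} ∫ k^{−it} q_m q_n (m/n)^{it} Φ(ct) dt` and
`I₂ = ∑_{m,n} ∫ q_m q_n (m/n)^{it} Φ(ct) dt` (all sums absolutely convergent), one has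
`I₂ > 0` and `I₁ / I₂ ≥ ∑_{k ≥ 1} a_k q_k`. -/
theorem resonance_ratio_lower_bound (q a : ℕ → ℝ)
    (hq : ∀ n, 0 ≤ q n) (hq0 : q 0 = 0) (hq1 : q 1 = 1)
    (hmul : ∀ m n : ℕ, q (m * n) = q m * q n) (hsum : Summable q)
    (ha : ∀ k, 0 ≤ a k) (ha0 : a 0 = 0) (haq : Summable (fun k => a k * q k))
    (c : ℝ) (hc : 0 < c)
    (hI1 : Summable (fun k : ℕ => a k * (∑' m : ℕ, ∑' n : ℕ, ∫ t : ℝ,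
        Complex.exp (-(Complex.I * t) * Real.log k)
          * (q m * q n : ℝ) * Complex.exp (Complex.I * t * (Real.log m - Real.log n))
          * Real.exp (-(c * t)^2)).re)) :
    0 < (∑' m : ℕ, ∑' n : ℕ, ∫ t : ℝ,
        (q m * q n : ℝ) * Complex.exp (Complex.I * t * (Real.log m - Real.log n))
          * Real.exp (-(c * t)^2)).re ∧
    ∑' k : ℕ, a k * q k
      ≤ (∑' k : ℕ, a k * (∑' m : ℕ, ∑' n : ℕ, ∫ t : ℝ,
            Complex.exp (-(Complex.I * t) * Real.log k)
              * (q m * q n : ℝ) * Complex.exp (Complex.I * t * (Real.log m - Real.log n))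
              * Real.exp (-(c * t)^2)).re)
        / (∑' m : ℕ, ∑' n : ℕ, ∫ t : ℝ,
            (q m * q n : ℝ) * Complex.exp (Complex.I * t * (Real.log m - Real.log n))
              * Real.exp (-(c * t)^2)).re := by
  have hCpos : 0 < Real.sqrt (π / c^2) := Real.sqrt_pos.mpr (by positivity)
  set C : ℝ := Real.sqrt (π / c^2) with hCdef
  -- summability of rows
  have hrow : ∀ (m : ℕ) (x : ℕ → ℝ), Summable (fun n => q m * q n * Gg c (x n)) := by
    intro m x
    apply Summable.of_nonneg_of_le
      (fun n => mul_nonneg (mul_nonneg (hq m) (hq n)) (Gg_nonneg c _))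
      (fun n => ?_) (hsum.mul_left (q m * C))
    calc q m * q n * Gg c (x n) ≤ q m * q n * C :=
          mul_le_mul_of_nonneg_left (Gg_le c _) (mul_nonneg (hq m) (hq n))
      _ = q m * C * q n := by ring
  have hrowle : ∀ (m : ℕ) (x : ℕ → ℝ),
      (∑' n, q m * q n * Gg c (x n)) ≤ (C * ∑' n, q n) * q m := by
    intro m x
    calc (∑' n, q m * q n * Gg c (x n)) ≤ ∑' n, q m * C * q n := by
          apply Summable.tsum_le_tsum (fun n => ?_) (hrow m x) (hsum.mul_left (q m * C))
          calc q m * q n * Gg c (x n) ≤ q m * q n * C :=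
                mul_le_mul_of_nonneg_left (Gg_le c _) (mul_nonneg (hq m) (hq n))
            _ = q m * C * q n := by ring
      _ = q m * C * ∑' n, q n := tsum_mul_left
      _ = (C * ∑' n, q n) * q m := by ring
  have hrownn : ∀ (m : ℕ) (x : ℕ → ℝ), 0 ≤ ∑' n, q m * q n * Gg c (x n) :=
    fun m x => tsum_nonneg fun n => mul_nonneg (mul_nonneg (hq m) (hq n)) (Gg_nonneg c _)
  -- T2 and T1 as explicit functions
  have hsummT2 : Summable (fun m => ∑' n, q m * q n * Gg c (Real.log m - Real.log n)) :=
    Summable.of_nonneg_of_le (fun m => hrownn m _) (fun m => hrowle m _)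
      (hsum.mul_left (C * ∑' n, q n))
  have hsummT1 : ∀ k : ℕ, Summable (fun m =>
      ∑' n, q m * q n * Gg c (Real.log m - Real.log n - Real.log k)) := fun k =>
    Summable.of_nonneg_of_le (fun m => hrownn m _) (fun m => hrowle m _)
      (hsum.mul_left (C * ∑' n, q n))
  -- rewriting the complex tsums
  have hrw2 : (∑' m : ℕ, ∑' n : ℕ, ∫ t : ℝ,
        (q m * q n : ℝ) * Complex.exp (Complex.I * t * (Real.log m - Real.log n))
          * Real.exp (-(c * t)^2)).re
      = ∑' m : ℕ, ∑' n : ℕ, q m * q n * Gg c (Real.log m - Real.log n) := by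
    have h : (∑' m : ℕ, ∑' n : ℕ, ∫ t : ℝ,
        (q m * q n : ℝ) * Complex.exp (Complex.I * t * (Real.log m - Real.log n))
          * Real.exp (-(c * t)^2))
        = ((∑' m : ℕ, ∑' n : ℕ, q m * q n * Gg c (Real.log m - Real.log n) : ℝ) : ℂ) := by
      rw [Complex.ofReal_tsum]
      apply tsum_congr; intro m
      rw [Complex.ofReal_tsum]
      apply tsum_congr; intro n
      simpa [Complex.ofReal_sub] using int2 c (Real.log m - Real.log n) (q m * q n) hc
    rw [h, Complex.ofReal_re]
  have hrw1 : ∀ k : ℕ, (∑' m : ℕ, ∑' n : ℕ, ∫ t : ℝ,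
        Complex.exp (-(Complex.I * t) * Real.log k)
          * (q m * q n : ℝ) * Complex.exp (Complex.I * t * (Real.log m - Real.log n))
          * Real.exp (-(c * t)^2)).re
      = ∑' m : ℕ, ∑' n : ℕ, q m * q n * Gg c (Real.log m - Real.log n - Real.log k) := by
    intro k
    have h : (∑' m : ℕ, ∑' n : ℕ, ∫ t : ℝ,
        Complex.exp (-(Complex.I * t) * Real.log k)
          * (q m * q n : ℝ) * Complex.exp (Complex.I * t * (Real.log m - Real.log n))
          * Real.exp (-(c * t)^2))
        = ((∑' m : ℕ, ∑' n : ℕ, q m * q n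
            * Gg c (Real.log m - Real.log n - Real.log k) : ℝ) : ℂ) := by
      rw [Complex.ofReal_tsum]
      apply tsum_congr; intro m
      rw [Complex.ofReal_tsum]
      apply tsum_congr; intro n
      simpa [Complex.ofReal_sub] using int1 c (Real.log m - Real.log n) (Real.log k) (q m * q n) hc
    rw [h, Complex.ofReal_re]
  -- positivity of I₂
  have hI2pos : 0 < ∑' m : ℕ, ∑' n : ℕ, q m * q n * Gg c (Real.log m - Real.log n) := by
    have h1 : Gg c 0 ≤ ∑' n : ℕ, q 1 * q n * Gg c (Real.log ((1:ℕ):ℝ) - Real.log n) := by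
      have := Summable.le_tsum (hrow 1 (fun n => Real.log 1 - Real.log n)) 1
        (fun n _ => mul_nonneg (mul_nonneg (hq 1) (hq n)) (Gg_nonneg c _))
      simpa [hq1] using this
    have h2 := Summable.le_tsum hsummT2 1 (fun m _ => hrownn m _)
    calc (0:ℝ) < Gg c 0 := Gg_pos c 0 hc
      _ ≤ _ := h1
      _ ≤ _ := h2
  -- the key shift inequality
  have key : ∀ k : ℕ, 1 ≤ k →
      q k * (∑' m : ℕ, ∑' n : ℕ, q m * q n * Gg c (Real.log m - Real.log n))
        ≤ ∑' m : ℕ, ∑' n : ℕ, q m * q n * Gg c (Real.log m - Real.log n - Real.log k) := by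
    intro k hk
    have hinj : Function.Injective (fun m : ℕ => k * m) := fun x y h => by
      exact Nat.eq_of_mul_eq_mul_left hk h
    have heq : ∀ m : ℕ,
        q k * ∑' n : ℕ, q m * q n * Gg c (Real.log m - Real.log n)
          = ∑' n : ℕ, q (k*m) * q n * Gg c (Real.log (k*m : ℕ) - Real.log n - Real.log k) := by
      intro m
      rcases Nat.eq_zero_or_pos m with rfl | hm
      · simp [hq0]
      · have hk' : ((k:ℝ)) ≠ 0 := Nat.cast_ne_zero.mpr (by omega)
        have hm' : ((m:ℝ)) ≠ 0 := Nat.cast_ne_zero.mpr (by omega)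
        have hlog : Real.log ((k*m : ℕ) : ℝ) = Real.log k + Real.log m := by
          push_cast
          rw [Real.log_mul hk' hm']
        rw [← tsum_mul_left]
        apply tsum_congr; intro n
        rw [hmul k m, hlog,
          show Real.log k + Real.log m - Real.log n - Real.log k
            = Real.log m - Real.log n from by ring]
        ring
    calc q k * (∑' m : ℕ, ∑' n : ℕ, q m * q n * Gg c (Real.log m - Real.log n))
        = ∑' m : ℕ, q k * ∑' n : ℕ, q m * q n * Gg c (Real.log m - Real.log n) :=
          tsum_mul_left.symm
      _ = ∑' m : ℕ, ∑' n : ℕ, q (k*m) * q n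
            * Gg c (Real.log (k*m : ℕ) - Real.log n - Real.log k) := tsum_congr heq
      _ ≤ ∑' m : ℕ, ∑' n : ℕ, q m * q n * Gg c (Real.log m - Real.log n - Real.log k) := by
          refine Summable.tsum_le_tsum_of_inj (fun m : ℕ => k * m) hinj
            (fun d _ => hrownn d _) (fun m => le_rfl) ?_ (hsummT1 k)
          exact (hsummT2.mul_left (q k)).congr heq
  -- main inequality
  have hI1' : Summable (fun k : ℕ => a k *
      ∑' m : ℕ, ∑' n : ℕ, q m * q n * Gg c (Real.log m - Real.log n - Real.log k)) :=
    hI1.congr (fun k => by rw [hrw1 k])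
  have hmain : (∑' k : ℕ, a k * q k)
      * (∑' m : ℕ, ∑' n : ℕ, q m * q n * Gg c (Real.log m - Real.log n))
      ≤ ∑' k : ℕ, a k *
        ∑' m : ℕ, ∑' n : ℕ, q m * q n * Gg c (Real.log m - Real.log n - Real.log k) := by
    rw [← tsum_mul_right]
    apply Summable.tsum_le_tsum (fun k => ?_)
      (haq.mul_right (∑' m : ℕ, ∑' n : ℕ, q m * q n * Gg c (Real.log m - Real.log n))) hI1'
    rcases Nat.eq_zero_or_pos k with rfl | hk
    · simp [ha0]
    · rw [mul_assoc]
      exact mul_le_mul_of_nonneg_left (key k hk) (ha k)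
  constructor
  · rw [hrw2]; exact hI2pos
  · have hnum : (∑' k : ℕ, a k * (∑' m : ℕ, ∑' n : ℕ, ∫ t : ℝ,
        Complex.exp (-(Complex.I * t) * Real.log k)
          * (q m * q n : ℝ) * Complex.exp (Complex.I * t * (Real.log m - Real.log n))
          * Real.exp (-(c * t)^2)).re)
      = ∑' k : ℕ, a k *
        ∑' m : ℕ, ∑' n : ℕ, q m * q n * Gg c (Real.log m - Real.log n - Real.log k) :=
      tsum_congr (fun k => by rw [hrw1 k])
    rw [hnum, hrw2, le_div_iff₀ hI2pos]
    exact hmain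
end
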